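/- Let X be a locally compact Hausdorff space and F a sheaf of abelian groups (or objects of a complete abelian category) on X. Define Θ(F) : K ↦ colim_{K ⊆ U open} F(U) on the poset of compact subsets of X. Then Θ(F) satisfies: (i) Θ(F)(∅) = 0 (terminal); (iii) for every compact K, the canonical map colim_{K ⋐ K'} Θ(F)(K') → Θ(F)(K) is an isomorphism, where K ⋐ K' means K' contains an open neighborhood of K. -/

import Mathlib

open CategoryTheory CategoryTheory.Limits TopologicalSpace

variable (X : Type) [TopologicalSpace X]

/-- The poset of open neighbourhoods of a set `K`. -/
abbrev NbhdIdx (K : Set X) : Type := {U : Set X // IsOpen U ∧ K ⊆ U}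

/-- The inclusion of the poset of open neighbourhoods of `K` into the opens of `X`. -/
def nbhdToOpens (K : Set X) : NbhdIdx X K ⥤ Opens (TopCat.of X) :=
  Monotone.functor (f := fun U => ⟨U.1, U.2.1⟩) (fun _ _ h => h)

/-- The diagram `U ↦ F(U)` over open neighbourhoods of `K`, whose colimit is `Θ(F)(K)`. -/
def thetaDiag (F : TopCat.Presheaf AddCommGrpCat (TopCat.of X)) (K : Set X) :
    (NbhdIdx X K)ᵒᵖ ⥤ AddCommGrpCat :=
  (nbhdToOpens X K).op ⋙ F

/-- `Θ(F)(K) = colim_{K ⊆ U open} F(U)`. -/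
noncomputable def theta (F : TopCat.Presheaf AddCommGrpCat (TopCat.of X)) (K : Set X) :
    AddCommGrpCat :=
  colimit (thetaDiag X F K)

/-- The poset of pairs `(K', U)` with `K'` compact, `K ⊆ interior K'`, and `U` an open
containing `K'`; the colimit of `F(U)` over (the opposite of) this poset computes
`colim_{K ⋐ K'} Θ(F)(K')`. -/
abbrev PairIdx (K : Set X) : Type :=
  {p : Set X × Set X // (IsCompact p.1 ∧ K ⊆ interior p.1) ∧ (IsOpen p.2 ∧ p.1 ⊆ p.2)}

/-- Projection `(K', U) ↦ U` from pairs to open neighbourhoods of `K`. -/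
noncomputable def pairProj (K : Set X) : PairIdx X K ⥤ NbhdIdx X K :=
  Monotone.functor
    (f := fun p => ⟨p.1.2, p.2.2.1,
      fun x hx => p.2.2.2 (interior_subset (p.2.1.2 hx))⟩)
    (fun _ _ h => h.2)

/-- For a sheaf of abelian groups `F` on a locally compact Hausdorff space `X`:
(i) `Θ(F)(∅)` is zero; (iii) for every compact `K` the canonical map
`colim_{K ⋐ K'} Θ(F)(K') → Θ(F)(K)` is an isomorphism. -/
lemma subsingleton_of_isZero' {G : AddCommGrpCat} (h : IsZero G) : Subsingleton G := by
  constructor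
  intro a b
  have h1 : (𝟙 G) = 0 := h.eq_of_src _ _
  have ha : a = (0 : G ⟶ G) a := by rw [← h1]; rfl
  have hb : b = (0 : G ⟶ G) b := by rw [← h1]; rfl
  rw [ha, hb]
  simp

theorem stmt14 [LocallyCompactSpace X] [T2Space X]
    (F : TopCat.Presheaf AddCommGrpCat (TopCat.of X)) (hF : F.IsSheaf)
    (K : Set X) (hK : IsCompact K) :
    IsZero (theta X F ∅) ∧
    IsIso (colimit.pre (thetaDiag X F K) (pairProj X K).op) := by

  constructor
  · -- Part (i)
    haveI : Nonempty (NbhdIdx X (∅ : Set X)) := ⟨⟨Set.univ, isOpen_univ, Set.subset_univ _⟩⟩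
    haveI : IsCofilteredOrEmpty (NbhdIdx X (∅ : Set X)) := by
      constructor
      · intro U V
        exact ⟨⟨U.1 ∩ V.1, U.2.1.inter V.2.1, by simp⟩,
          homOfLE Set.inter_subset_left, homOfLE Set.inter_subset_right, trivial⟩
      · intro U V f g
        exact ⟨U, 𝟙 U, Subsingleton.elim _ _⟩
    haveI : IsCofiltered (NbhdIdx X (∅ : Set X)) := { }
    have hterm : IsTerminal (F.obj (Opposite.op (⊥ : Opens (TopCat.of X)))) :=
      TopCat.Sheaf.isTerminalOfEmpty ⟨F, hF⟩
    have hZbot : IsZero (F.obj (Opposite.op (⊥ : Opens (TopCat.of X)))) :=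
      (AddCommGrpCat.isZero_of_subsingleton (AddCommGrpCat.of PUnit)).of_iso
        (IsZero.isoIsTerminal (AddCommGrpCat.isZero_of_subsingleton (AddCommGrpCat.of PUnit)) hterm).symm
    set e : NbhdIdx X (∅ : Set X) := ⟨∅, isOpen_empty, Set.Subset.rfl⟩ with he
    have hobj : (nbhdToOpens X (∅ : Set X)).obj e = (⊥ : Opens (TopCat.of X)) := by
      apply Opens.ext; rfl
    have hZ : IsZero ((thetaDiag X F (∅ : Set X)).obj (Opposite.op e)) := by
      have heq : (thetaDiag X F (∅ : Set X)).obj (Opposite.op e)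
          = F.obj (Opposite.op (⊥ : Opens (TopCat.of X))) := by
        simp only [thetaDiag, Functor.comp_obj, Functor.op_obj, hobj]
      rw [heq]; exact hZbot
    haveI hsub : Subsingleton ((thetaDiag X F (∅ : Set X)).obj (Opposite.op e)) :=
      subsingleton_of_isZero' hZ
    haveI : PreservesFilteredColimitsOfSize.{0, 0} (forget AddCommGrpCat) :=
      preservesSmallestFilteredColimits_of_preservesFilteredColimits _
    haveI : Subsingleton (theta X F (∅ : Set X)) := by
      constructor
      intro x y
      obtain ⟨U, a, rfl⟩ := Concrete.colimit_exists_rep (thetaDiag X F (∅ : Set X)) x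
      obtain ⟨V, b, rfl⟩ := Concrete.colimit_exists_rep (thetaDiag X F (∅ : Set X)) y
      have hU : e ≤ U.unop := fun x hx => hx.elim
      have hV : e ≤ V.unop := fun x hx => hx.elim
      have hx : colimit.ι (thetaDiag X F (∅ : Set X)) U a
          = colimit.ι (thetaDiag X F (∅ : Set X)) (Opposite.op e)
            ((thetaDiag X F (∅ : Set X)).map (homOfLE hU).op a) := by
        rw [← colimit.w (thetaDiag X F (∅ : Set X)) (homOfLE hU).op, comp_apply]
      have hy : colimit.ι (thetaDiag X F (∅ : Set X)) V b
          = colimit.ι (thetaDiag X F (∅ : Set X)) (Opposite.op e)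
            ((thetaDiag X F (∅ : Set X)).map (homOfLE hV).op b) := by
        rw [← colimit.w (thetaDiag X F (∅ : Set X)) (homOfLE hV).op, comp_apply]
      rw [hx, hy]
      congr 1
      exact Subsingleton.elim _ _
    exact AddCommGrpCat.isZero_of_subsingleton _
  · -- Part (iii)
    haveI : IsCofilteredOrEmpty (PairIdx X K) := by
      constructor
      · intro p q
        obtain ⟨L, hLc, hKL, hLsub⟩ := exists_compact_between hK
          (isOpen_interior.inter isOpen_interior)
          (Set.subset_inter p.2.1.2 q.2.1.2)
        have hLp : L ⊆ p.1.1 := fun x hx => interior_subset (hLsub hx).1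
        have hLq : L ⊆ q.1.1 := fun x hx => interior_subset (hLsub hx).2
        refine ⟨⟨(L, p.1.2 ∩ q.1.2), ⟨hLc, hKL⟩,
          ⟨p.2.2.1.inter q.2.2.1, Set.subset_inter (hLp.trans p.2.2.2) (hLq.trans q.2.2.2)⟩⟩,
          homOfLE ⟨hLp, Set.inter_subset_left⟩, homOfLE ⟨hLq, Set.inter_subset_right⟩, trivial⟩
      · intro p q f g
        exact ⟨p, 𝟙 p, Subsingleton.elim _ _⟩
    haveI : (pairProj X K).Initial := by
      apply Functor.initial_of_exists_of_isCofiltered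
      · intro U
        obtain ⟨L, hLc, hKL, hLU⟩ := exists_compact_between hK U.2.1 U.2.2
        exact ⟨⟨(L, U.1), ⟨hLc, hKL⟩, ⟨U.2.1, hLU⟩⟩,
          ⟨homOfLE (show (U.1 : Set X) ⊆ U.1 from Set.Subset.rfl)⟩⟩
      · intro d c s s'
        exact ⟨c, 𝟙 c, Subsingleton.elim _ _⟩
    haveI : (pairProj X K).op.Final := Functor.final_op_of_initial _
    infer_instance
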